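/- arXiv:2103.07446 — 5 statements merged into one kernel-verified Lean document; each statement's English description precedes it below -/
import Mathlib

section
/- Let p : ℝ → ℝ be strictly convex, differentiable, and strictly increasing, and fix x^{ND} ∈ ℝ and y^{ND} > 0. Then the function ȳ(x) = y^{ND}·p'(x^{ND})·(x^{ND} − x)/(p(x^{ND}) − p(x)), defined for x ≠ x^{ND} and extended by ȳ(x^{ND}) = y^{ND}, is strictly decreasing in x. -/
open Set

/-- With strictly convex demand, the optimal profitability threshold function
`ȳ(x) = y^{ND} p'(x^{ND})(x^{ND} − x)/(p(x^{ND}) − p(x))` (extended by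
`ȳ(x^{ND}) = y^{ND}`) is strictly decreasing. -/
theorem threshold_strictAnti_of_convex
    (p : ℝ → ℝ) (hconv : StrictConvexOn ℝ Set.univ p)
    (hdiff : Differentiable ℝ p) (hmono : StrictMono p)
    (xND yND : ℝ) (hy : 0 < yND) :
    StrictAnti (fun x : ℝ =>
      if x = xND then yND
      else yND * (deriv p xND * (xND - x) / (p xND - p x))) := by
  set d := deriv p xND with hd
  -- positivity of the derivative at xND
  have hd0 : 0 < d := by
    have h1 : slope p (xND - 1) xND < d :=
      hconv.slope_lt_deriv (mem_univ _) (mem_univ _) (by linarith) (hdiff xND)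
    have h2 : 0 < slope p (xND - 1) xND := by
      rw [slope_def_field]
      have hp := hmono (show xND - 1 < xND by linarith)
      exact div_pos (by linarith) (by linarith)
    linarith
  -- positivity of secant slopes through xND
  have hSpos : ∀ x : ℝ, x ≠ xND → 0 < slope p x xND := by
    intro x hx
    rw [slope_def_field]
    rcases lt_or_gt_of_ne hx with h | h
    · have hp := hmono h
      exact div_pos (by linarith) (by linarith)
    · have hp := hmono h
      exact div_pos_of_neg_of_neg (by linarith) (by linarith)
  -- rewriting the threshold in terms of secant slopes
  have key : ∀ x : ℝ, x ≠ xND →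
      yND * (d * (xND - x) / (p xND - p x)) = yND * d / slope p x xND := by
    intro x hx
    have hpx : p x ≠ p xND := fun h => hx (hmono.injective h)
    rw [slope_def_field]
    have h1 : p xND - p x ≠ 0 := sub_ne_zero.mpr (Ne.symm hpx)
    have h2 : x - xND ≠ 0 := sub_ne_zero.mpr hx
    have h3 : p x - p xND ≠ 0 := sub_ne_zero.mpr hpx
    field_simp
  intro a b hab
  simp only
  by_cases ha : a = xND
  · -- a = xND < b
    have hb : b ≠ xND := by intro h; rw [ha, h] at hab; exact lt_irrefl _ hab
    rw [if_pos ha, if_neg hb, key b hb]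
    have hdlt : d < slope p b xND := by
      have := hconv.deriv_lt_slope (mem_univ xND) (mem_univ b) (ha ▸ hab) (hdiff xND)
      rwa [slope_comm] at this
    have hSb : 0 < slope p b xND := hSpos b hb
    rw [div_lt_iff₀ hSb]
    calc yND * d < yND * slope p b xND := by
          exact mul_lt_mul_of_pos_left hdlt hy
      _ = yND * slope p b xND := rfl
  · by_cases hb : b = xND
    · -- a < xND = b
      rw [if_pos hb, if_neg ha, key a ha]
      have hlt : slope p a xND < d :=
        hconv.slope_lt_deriv (mem_univ a) (mem_univ xND) (hb ▸ hab) (hdiff xND)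
      have hSa : 0 < slope p a xND := hSpos a ha
      rw [lt_div_iff₀ hSa]
      exact mul_lt_mul_of_pos_left hlt hy
    · -- both differ from xND
      rw [if_neg ha, if_neg hb, key a ha, key b hb]
      have hS : slope p a xND < slope p b xND := by
        have := hconv.secant_strict_mono (a := xND) (mem_univ xND) (mem_univ a)
          (mem_univ b) ha hb hab
        have e : ∀ u : ℝ, slope p u xND = (p u - p xND) / (u - xND) := fun u => by
          rw [slope_def_field, ← neg_div_neg_eq, neg_sub, neg_sub]
        rw [e, e]
        exact this
      exact div_lt_div_of_pos_left (mul_pos hy hd0) (hSpos a ha) hS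
end

section
/- Let p : ℝ → ℝ be strictly concave, differentiable, and strictly increasing, and fix x^{ND} ∈ ℝ and y^{ND} > 0. Then the function ȳ(x) = y^{ND}·p'(x^{ND})·(x^{ND} − x)/(p(x^{ND}) − p(x)), defined for x ≠ x^{ND} and extended by ȳ(x^{ND}) = y^{ND}, is strictly increasing in x. -/
open Set

/-- With strictly concave demand, the optimal profitability threshold function
`ȳ(x) = y^{ND} p'(x^{ND})(x^{ND} − x)/(p(x^{ND}) − p(x))` (extended by
`ȳ(x^{ND}) = y^{ND}`) is strictly increasing. -/
theorem threshold_strictMono_of_concave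
    (p : ℝ → ℝ) (hconc : StrictConcaveOn ℝ Set.univ p)
    (hdiff : Differentiable ℝ p) (hmono : StrictMono p)
    (xND yND : ℝ) (hy : 0 < yND) :
    StrictMono (fun x : ℝ =>
      if x = xND then yND
      else yND * (deriv p xND * (xND - x) / (p xND - p x))) := by
  set d := deriv p xND with hdd
  -- slope from xND is positive
  have hspos : ∀ x : ℝ, x ≠ xND → 0 < slope p xND x := by
    intro x hx
    rcases lt_or_gt_of_ne hx with h | h
    · rw [slope_comm, slope_def_field]
      exact div_pos (sub_pos.2 (hmono h)) (sub_pos.2 h)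
    · rw [slope_def_field]
      exact div_pos (sub_pos.2 (hmono h)) (sub_pos.2 h)
  have hlt : ∀ x : ℝ, xND < x → slope p xND x < d := fun x hx =>
    hconc.slope_lt_deriv (mem_univ _) (mem_univ _) hx (hdiff xND)
  have hgt : ∀ x : ℝ, x < xND → d < slope p xND x := by
    intro x hx
    have := hconc.deriv_lt_slope (mem_univ _) (mem_univ _) hx (hdiff xND)
    rwa [slope_comm] at this
  have hdpos : 0 < d :=
    lt_trans (hspos (xND + 1) (by linarith)) (hlt (xND + 1) (by linarith))
  -- the unified denominator function
  set S : ℝ → ℝ := fun x => if x = xND then d else slope p xND x with hS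
  have hSpos : ∀ x : ℝ, 0 < S x := by
    intro x
    by_cases hx : x = xND
    · simp [hS, hx, hdpos]
    · simp only [hS, hx, if_false]
      exact hspos x hx
  have hSanti : ∀ a b : ℝ, a < b → S b < S a := by
    intro a b hab
    by_cases ha : a = xND
    · rw [ha] at hab ⊢
      have hb : b ≠ xND := ne_of_gt hab
      simp only [hS, hb, if_false, if_pos rfl, if_true]
      exact hlt b hab
    · by_cases hb : b = xND
      · rw [hb] at hab ⊢
        simp only [hS, ha, if_false, if_pos rfl, if_true]
        exact hgt a hab
      · simp only [hS, ha, hb, if_false]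
        have := hconc.secant_strict_mono (a := xND) (mem_univ a) (mem_univ a)
          (mem_univ b) ha hb hab
        simpa [slope_def_field] using this
  have key : ∀ x : ℝ,
      (if x = xND then yND else yND * (d * (xND - x) / (p xND - p x)))
        = yND * d / S x := by
    intro x
    by_cases hx : x = xND
    · have hSx : S x = d := by simp [hS, hx]
      rw [if_pos hx, hSx, mul_div_assoc, div_self hdpos.ne', mul_one]
    · have hSx : S x = slope p xND x := by simp [hS, hx]
      rw [if_neg hx, hSx, slope_def_field]
      have h1 : p x - p xND ≠ 0 := sub_ne_zero.2 (fun h => hx (hmono.injective h))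
      have h2 : p xND - p x ≠ 0 := sub_ne_zero.2 (fun h => hx (hmono.injective h).symm)
      have h3 : x - xND ≠ 0 := sub_ne_zero.2 hx
      field_simp
      ring
  intro a b hab
  simp only [key a, key b]
  exact div_lt_div_of_pos_left (mul_pos hy hdpos) (hSpos b) (hSanti a b hab)
end

section
/- Let X, Y be jointly distributed real random variables with Y uniform on [0,1], and with X | Y = y uniform on [0,1] independently of y. Then the unique pair (x̂, ŷ) ∈ (0,1)² satisfying E[X | (X − x̂)(Y − ŷ) < 0] = x̂ and E[Y | (X − x̂)(Y − ŷ) < 0] = ŷ is (x̂, ŷ) = (1/2, 1/2). -/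
open MeasureTheory Set

noncomputable def μ0 : Measure ℝ := volume.restrict (Icc (0:ℝ) 1)

lemma inter_Iio' {a : ℝ} (h : a ∈ Ioo (0:ℝ) 1) : Iio a ∩ Icc (0:ℝ) 1 = Ico 0 a := by
  ext z
  simp only [mem_inter_iff, mem_Iio, mem_Icc, mem_Ico]
  constructor
  · rintro ⟨h1, h2, _⟩; exact ⟨h2, h1⟩
  · rintro ⟨h1, h2⟩; exact ⟨h2, h1, (h2.trans h.2).le⟩

lemma inter_Ioi' {a : ℝ} (h : a ∈ Ioo (0:ℝ) 1) : Ioi a ∩ Icc (0:ℝ) 1 = Ioc a 1 := by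
  ext z
  simp only [mem_inter_iff, mem_Ioi, mem_Icc, mem_Ioc]
  constructor
  · rintro ⟨h1, _, h3⟩; exact ⟨h1, h3⟩
  · rintro ⟨h1, h2⟩; exact ⟨h1, (h.1.trans h1).le, h2⟩

lemma meas_Iio' {a : ℝ} (h : a ∈ Ioo (0:ℝ) 1) : μ0 (Iio a) = ENNReal.ofReal a := by
  rw [μ0, Measure.restrict_apply measurableSet_Iio, inter_Iio' h, Real.volume_Ico, sub_zero]

lemma meas_Ioi' {a : ℝ} (h : a ∈ Ioo (0:ℝ) 1) : μ0 (Ioi a) = ENNReal.ofReal (1 - a) := by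
  rw [μ0, Measure.restrict_apply measurableSet_Ioi, inter_Ioi' h, Real.volume_Ioc]

lemma int_id_Iio {a : ℝ} (h : a ∈ Ioo (0:ℝ) 1) : ∫ x in Iio a, x ∂μ0 = a^2/2 := by
  rw [μ0, Measure.restrict_restrict measurableSet_Iio, inter_Iio' h,
    integral_Ico_eq_integral_Ioo, ← integral_Ioc_eq_integral_Ioo,
    ← intervalIntegral.integral_of_le h.1.le, integral_id]
  ring

lemma int_id_Ioi {a : ℝ} (h : a ∈ Ioo (0:ℝ) 1) : ∫ x in Ioi a, x ∂μ0 = (1 - a^2)/2 := by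
  rw [μ0, Measure.restrict_restrict measurableSet_Ioi, inter_Ioi' h,
    ← intervalIntegral.integral_of_le h.2.le, integral_id]
  ring

lemma set_eq (xh yh : ℝ) : {q : ℝ × ℝ | (q.1 - xh) * (q.2 - yh) < 0}
    = (Iio xh ×ˢ Ioi yh) ∪ (Ioi xh ×ˢ Iio yh) := by
  ext ⟨a, b⟩
  simp only [mem_setOf_eq, mem_union, mem_prod, mem_Iio, mem_Ioi, mul_neg_iff, sub_pos, sub_neg]
  tauto

lemma disj (xh yh : ℝ) : Disjoint (Iio xh ×ˢ Ioi yh) (Ioi xh ×ˢ Iio yh) := by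
  rw [Set.disjoint_left]
  rintro ⟨a, b⟩ ⟨ha, _⟩ ⟨ha', _⟩
  simp only [mem_Iio] at ha
  simp only [mem_Ioi] at ha'
  exact lt_asymm ha ha'

instance : IsFiniteMeasure μ0 := by
  constructor
  rw [μ0, Measure.restrict_apply_univ, Real.volume_Icc]
  exact ENNReal.ofReal_lt_top

instance : SFinite μ0 := inferInstance

lemma int_id_μ0 : Integrable (fun x : ℝ => x) μ0 := continuous_id.integrableOn_Icc

lemma int_one_μ0 : Integrable (fun _ : ℝ => (1:ℝ)) μ0 :=
  continuous_const.integrableOn_Icc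

lemma integrable_fst : Integrable (fun q : ℝ × ℝ => q.1) (μ0.prod μ0) := by
  simpa using int_id_μ0.mul_prod int_one_μ0

lemma integrable_snd : Integrable (fun q : ℝ × ℝ => q.2) (μ0.prod μ0) := by
  simpa using int_one_μ0.mul_prod int_id_μ0

lemma measure_S {xh yh : ℝ} (hx : xh ∈ Ioo (0:ℝ) 1) (hy : yh ∈ Ioo (0:ℝ) 1) :
    ((μ0.prod μ0) {q : ℝ × ℝ | (q.1 - xh) * (q.2 - yh) < 0}).toReal
      = xh * (1 - yh) + (1 - xh) * yh := by
  rw [set_eq, measure_union (disj xh yh) (measurableSet_Ioi.prod measurableSet_Iio),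
    Measure.prod_prod, Measure.prod_prod, meas_Iio' hx, meas_Ioi' hx, meas_Iio' hy,
    meas_Ioi' hy, ← ENNReal.ofReal_mul hx.1.le, ← ENNReal.ofReal_mul (by linarith [hx.2]),
    ← ENNReal.ofReal_add (by nlinarith [hx.1, hy.2] : (0:ℝ) ≤ xh * (1 - yh))
      (by nlinarith [hx.2, hy.1] : (0:ℝ) ≤ (1 - xh) * yh), ENNReal.toReal_ofReal]
  nlinarith [hx.1, hx.2, hy.1, hy.2]

lemma prod_fst (s t : Set ℝ) :
    ∫ q in s ×ˢ t, q.1 ∂(μ0.prod μ0) = (∫ x in s, x ∂μ0) * (μ0 t).toReal := by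
  have := setIntegral_prod_mul (μ := μ0) (ν := μ0) (fun x : ℝ => x) (fun _ : ℝ => (1:ℝ)) s t
  simpa [measureReal_def] using this

lemma prod_snd (s t : Set ℝ) :
    ∫ q in s ×ˢ t, q.2 ∂(μ0.prod μ0) = (μ0 s).toReal * (∫ y in t, y ∂μ0) := by
  have := setIntegral_prod_mul (μ := μ0) (ν := μ0) (fun _ : ℝ => (1:ℝ)) (fun y : ℝ => y) s t
  simpa [measureReal_def] using this

lemma int_fst {xh yh : ℝ} (hx : xh ∈ Ioo (0:ℝ) 1) (hy : yh ∈ Ioo (0:ℝ) 1) :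
    ∫ q in {q : ℝ × ℝ | (q.1 - xh) * (q.2 - yh) < 0}, q.1 ∂(μ0.prod μ0)
      = xh^2/2 * (1 - yh) + (1 - xh^2)/2 * yh := by
  rw [set_eq, setIntegral_union (disj xh yh) (measurableSet_Ioi.prod measurableSet_Iio)
    integrable_fst.integrableOn integrable_fst.integrableOn, prod_fst, prod_fst,
    int_id_Iio hx, int_id_Ioi hx, meas_Iio' hy, meas_Ioi' hy,
    ENNReal.toReal_ofReal hy.1.le, ENNReal.toReal_ofReal (by linarith [hy.2])]

lemma int_snd {xh yh : ℝ} (hx : xh ∈ Ioo (0:ℝ) 1) (hy : yh ∈ Ioo (0:ℝ) 1) :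
    ∫ q in {q : ℝ × ℝ | (q.1 - xh) * (q.2 - yh) < 0}, q.2 ∂(μ0.prod μ0)
      = xh * ((1 - yh^2)/2) + (1 - xh) * (yh^2/2) := by
  rw [set_eq, setIntegral_union (disj xh yh) (measurableSet_Ioi.prod measurableSet_Iio)
    integrable_snd.integrableOn integrable_snd.integrableOn, prod_snd, prod_snd,
    int_id_Iio hy, int_id_Ioi hy, meas_Iio' hx, meas_Ioi' hx,
    ENNReal.toReal_ofReal hx.1.le, ENNReal.toReal_ofReal (by linarith [hx.2])]

/-- Regularity of the uniform example (θ = 1): with `X, Y` i.i.d. uniform on `[0,1]`,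
the unique interior pair `(x̂, ŷ)` such that the conditional means of `X` and `Y`
on the nondisclosure region `{(X − x̂)(Y − ŷ) < 0}` equal `x̂` and `ŷ`
is `(1/2, 1/2)`. -/
theorem uniform_example_regular :
    ∀ xh ∈ Set.Ioo (0:ℝ) 1, ∀ yh ∈ Set.Ioo (0:ℝ) 1,
      (((∫ q in {q : ℝ × ℝ | (q.1 - xh) * (q.2 - yh) < 0}, q.1
            ∂((volume.restrict (Icc (0:ℝ) 1)).prod (volume.restrict (Icc (0:ℝ) 1)))) /
          (((volume.restrict (Icc (0:ℝ) 1)).prod (volume.restrict (Icc (0:ℝ) 1)))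
            {q : ℝ × ℝ | (q.1 - xh) * (q.2 - yh) < 0}).toReal = xh) ∧
        ((∫ q in {q : ℝ × ℝ | (q.1 - xh) * (q.2 - yh) < 0}, q.2
            ∂((volume.restrict (Icc (0:ℝ) 1)).prod (volume.restrict (Icc (0:ℝ) 1)))) /
          (((volume.restrict (Icc (0:ℝ) 1)).prod (volume.restrict (Icc (0:ℝ) 1)))
            {q : ℝ × ℝ | (q.1 - xh) * (q.2 - yh) < 0}).toReal = yh))
      ↔ (xh = 1/2 ∧ yh = 1/2) := by
  intro xh hx yh hy
  have e : (volume.restrict (Icc (0:ℝ) 1)).prod (volume.restrict (Icc (0:ℝ) 1))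
      = μ0.prod μ0 := rfl
  rw [e, int_fst hx hy, int_snd hx hy, measure_S hx hy]
  have hMpos : 0 < xh * (1 - yh) + (1 - xh) * yh := by
    nlinarith [mul_pos hx.1 (by linarith [hy.2] : (0:ℝ) < 1 - yh),
      mul_pos (by linarith [hx.2] : (0:ℝ) < 1 - xh) hy.1]
  rw [div_eq_iff hMpos.ne', div_eq_iff hMpos.ne']
  constructor
  · rintro ⟨h1, h2⟩
    have f1 : xh^2 * (1 - yh) = (1 - xh)^2 * yh := by linear_combination (-2) * h1
    have f2 : xh * (1 - yh)^2 = yh^2 * (1 - xh) := by linear_combination 2 * h2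
    have hcube : (xh * (1 - yh))^3 = ((1 - xh) * yh)^3 := by
      calc (xh * (1 - yh))^3 = (xh^2 * (1 - yh)) * (xh * (1 - yh)^2) := by ring
        _ = ((1 - xh)^2 * yh) * (yh^2 * (1 - xh)) := by rw [f1, f2]
        _ = ((1 - xh) * yh)^3 := by ring
    have ha : (0:ℝ) < xh * (1 - yh) := mul_pos hx.1 (by linarith [hy.2])
    have hb : (0:ℝ) < (1 - xh) * yh := mul_pos (by linarith [hx.2]) hy.1
    have heq : xh * (1 - yh) = (1 - xh) * yh := by
      nlinarith [hcube, sq_nonneg (xh * (1 - yh) - (1 - xh) * yh),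
        sq_nonneg (xh * (1 - yh) + (1 - xh) * yh), mul_pos ha hb]
    have hxy : xh = yh := by linear_combination heq
    subst hxy
    have hx2 : xh = 1/2 := by nlinarith [f1, mul_pos hx.1 (by linarith [hx.2] : (0:ℝ) < 1 - xh)]
    exact ⟨hx2, hx2⟩
  · rintro ⟨h1, h2⟩
    subst h1; subst h2
    norm_num
end

section
/- Let X and Y be independent, with X uniform on [(1−θ)/2, (1+θ)/2] for some θ ∈ (0,1] and Y uniform on [0,1]. Then the unique pair (x̂, ŷ) with x̂ interior to the support of X and ŷ ∈ (0,1) satisfying E[X | (X − x̂)(Y − ŷ) < 0] = x̂ and E[Y | (X − x̂)(Y − ŷ) < 0] = ŷ is x̂ = 1/2, ŷ = 1/2. -/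
open MeasureTheory Set

lemma my_smul_prod {α β : Type*} [MeasurableSpace α] [MeasurableSpace β]
    (c : ENNReal) (μ : Measure α) (ν : Measure β) [SFinite μ] [SFinite ν] :
    (c • μ).prod ν = c • (μ.prod ν) := by
  ext s hs
  rw [Measure.prod_apply hs, Measure.smul_apply, smul_eq_mul,
    Measure.prod_apply hs, lintegral_smul_measure, smul_eq_mul]

lemma my_rect_fst (s t : Set ℝ) :
    ∫ q in s ×ˢ t, (q : ℝ × ℝ).1 ∂(volume : Measure (ℝ × ℝ))
      = (∫ x in s, x) * (volume t).toReal := by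
  rw [Measure.volume_eq_prod, ← Measure.prod_restrict]
  have h := integral_prod_mul (μ := volume.restrict s) (ν := volume.restrict t)
    (fun x : ℝ => x) (fun _ : ℝ => (1:ℝ))
  simp only [mul_one] at h
  rw [h, setIntegral_const]
  simp
  exact Or.inl rfl

lemma my_rect_snd (s t : Set ℝ) :
    ∫ q in s ×ˢ t, (q : ℝ × ℝ).2 ∂(volume : Measure (ℝ × ℝ))
      = (volume s).toReal * (∫ y in t, y) := by
  rw [Measure.volume_eq_prod, ← Measure.prod_restrict]
  have h := integral_prod_mul (μ := volume.restrict s) (ν := volume.restrict t)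
    (fun _ : ℝ => (1:ℝ)) (fun y : ℝ => y)
  simp only [one_mul] at h
  rw [h, setIntegral_const]
  simp
  exact Or.inl rfl

lemma my_int_Ico (c d : ℝ) (h : c ≤ d) : ∫ x in Ico c d, x = (d^2 - c^2)/2 := by
  rw [integral_Ico_eq_integral_Ioo, ← integral_Ioc_eq_integral_Ioo,
    ← intervalIntegral.integral_of_le h, integral_id]

lemma my_int_Ioc (c d : ℝ) (h : c ≤ d) : ∫ x in Ioc c d, x = (d^2 - c^2)/2 := by
  rw [← intervalIntegral.integral_of_le h, integral_id]

set_option maxHeartbeats 1000000 in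
/-- Regularity of every signal precision θ in the uniform example: with `X` uniform
on `[(1−θ)/2, (1+θ)/2]` and `Y` uniform on `[0,1]`, independent, the unique pair
`(x̂, ŷ)` with `x̂` interior to the support of `X` and `ŷ ∈ (0,1)` solving the
fixed-point conditions is `x̂ = ŷ = 1/2`. -/
theorem uniform_example_regular_theta
    (θ : ℝ) (hθ : θ ∈ Set.Ioc (0:ℝ) 1) :
    ∀ xh ∈ Set.Ioo ((1 - θ)/2) ((1 + θ)/2), ∀ yh ∈ Set.Ioo (0:ℝ) 1,
      (((∫ q in {q : ℝ × ℝ | (q.1 - xh) * (q.2 - yh) < 0}, q.1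
            ∂(((ENNReal.ofReal θ)⁻¹ • volume.restrict (Icc ((1 - θ)/2) ((1 + θ)/2))).prod
              (volume.restrict (Icc (0:ℝ) 1)))) /
          ((((ENNReal.ofReal θ)⁻¹ • volume.restrict (Icc ((1 - θ)/2) ((1 + θ)/2))).prod
              (volume.restrict (Icc (0:ℝ) 1)))
            {q : ℝ × ℝ | (q.1 - xh) * (q.2 - yh) < 0}).toReal = xh) ∧
        ((∫ q in {q : ℝ × ℝ | (q.1 - xh) * (q.2 - yh) < 0}, q.2
            ∂(((ENNReal.ofReal θ)⁻¹ • volume.restrict (Icc ((1 - θ)/2) ((1 + θ)/2))).prod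
              (volume.restrict (Icc (0:ℝ) 1)))) /
          ((((ENNReal.ofReal θ)⁻¹ • volume.restrict (Icc ((1 - θ)/2) ((1 + θ)/2))).prod
              (volume.restrict (Icc (0:ℝ) 1)))
            {q : ℝ × ℝ | (q.1 - xh) * (q.2 - yh) < 0}).toReal = yh))
      ↔ (xh = 1/2 ∧ yh = 1/2) := by
  obtain ⟨hθ0, hθ1⟩ := hθ
  intro xh hxh yh hyh
  obtain ⟨hx1, hx2⟩ := hxh
  obtain ⟨hy1, hy2⟩ := hyh
  set a : ℝ := (1 - θ)/2 with ha
  set b : ℝ := (1 + θ)/2 with hb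
  set S : Set (ℝ × ℝ) := {q : ℝ × ℝ | (q.1 - xh) * (q.2 - yh) < 0} with hSdef
  have hS : MeasurableSet S := by
    apply measurableSet_lt _ measurable_const
    exact (measurable_fst.sub measurable_const).mul (measurable_snd.sub measurable_const)
  set c : ENNReal := (ENNReal.ofReal θ)⁻¹ with hc
  set M : Measure (ℝ × ℝ) := (c • volume.restrict (Icc a b)).prod (volume.restrict (Icc (0:ℝ) 1))
    with hMdef
  set R : Set (ℝ × ℝ) := Icc a b ×ˢ Icc (0:ℝ) 1 with hRdef
  have hM : M = c • (volume : Measure (ℝ × ℝ)).restrict R := by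
    rw [hMdef, my_smul_prod, Measure.prod_restrict, ← Measure.volume_eq_prod]
  set A : Set (ℝ × ℝ) := Ico a xh ×ˢ Ioc yh 1 with hAdef
  set B : Set (ℝ × ℝ) := Ioc xh b ×ˢ Ico 0 yh with hBdef
  have hSR : S ∩ R = A ∪ B := by
    ext ⟨x, y⟩
    simp only [hSdef, hRdef, hAdef, hBdef, mem_inter_iff, mem_setOf_eq, mem_prod, mem_Icc,
      mem_Ico, mem_Ioc, mem_union]
    constructor
    · rintro ⟨hlt, ⟨hxa, hxb⟩, hy0, hy1'⟩
      rcases mul_neg_iff.mp hlt with ⟨h1, h2⟩ | ⟨h1, h2⟩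
      · exact Or.inr ⟨⟨by linarith, hxb⟩, hy0, by linarith⟩
      · exact Or.inl ⟨⟨hxa, by linarith⟩, by linarith, hy1'⟩
    · rintro (⟨⟨hxa, hxlt⟩, hygt, hy1'⟩ | ⟨⟨hxgt, hxb⟩, hy0, hylt⟩)
      · exact ⟨mul_neg_of_neg_of_pos (by linarith) (by linarith),
          ⟨hxa, by linarith⟩, by linarith, hy1'⟩
      · exact ⟨mul_neg_of_pos_of_neg (by linarith) (by linarith),
          ⟨by linarith, hxb⟩, hy0, by linarith⟩
  have hAmeas : MeasurableSet A := measurableSet_Ico.prod measurableSet_Ioc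
  have hBmeas : MeasurableSet B := measurableSet_Ioc.prod measurableSet_Ico
  have hdisj : Disjoint A B := by
    rw [Set.disjoint_left]
    rintro ⟨x, y⟩ ⟨⟨_, hx⟩, _⟩ ⟨⟨hx', _⟩, _⟩
    exact lt_irrefl x (hx.trans hx')
  -- measure of S
  have hctr : c.toReal = θ⁻¹ := by
    rw [hc, ENNReal.toReal_inv, ENNReal.toReal_ofReal hθ0.le]
  have hcne : c ≠ ⊤ := by
    rw [hc]
    exact ENNReal.inv_ne_top.mpr (ENNReal.ofReal_pos.mpr hθ0).ne'
  have hvolA : (volume : Measure (ℝ × ℝ)) A = ENNReal.ofReal ((xh - a) * (1 - yh)) := by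
    rw [hAdef, Measure.volume_eq_prod, Measure.prod_prod, Real.volume_Ico, Real.volume_Ioc,
      ← ENNReal.ofReal_mul (by linarith)]
  have hvolB : (volume : Measure (ℝ × ℝ)) B = ENNReal.ofReal ((b - xh) * yh) := by
    rw [hBdef, Measure.volume_eq_prod, Measure.prod_prod, Real.volume_Ioc, Real.volume_Ico,
      ← ENNReal.ofReal_mul (by linarith)]
    norm_num
  have hMS : (M S).toReal = θ⁻¹ * ((xh - a) * (1 - yh) + (b - xh) * yh) := by
    rw [hM, Measure.smul_apply, smul_eq_mul, Measure.restrict_apply hS, hSR,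
      measure_union hdisj hBmeas, hvolA, hvolB, ENNReal.toReal_mul, hctr,
      ENNReal.toReal_add ENNReal.ofReal_ne_top ENNReal.ofReal_ne_top,
      ENNReal.toReal_ofReal (by nlinarith), ENNReal.toReal_ofReal (by nlinarith)]
  -- integrability
  have hIA1 : IntegrableOn (fun q : ℝ × ℝ => q.1) A volume := by
    refine ((continuous_fst.continuousOn).integrableOn_compact
      (isCompact_Icc.prod isCompact_Icc : IsCompact (Icc a xh ×ˢ Icc yh 1))).mono_set ?_
    exact Set.prod_mono Ico_subset_Icc_self Ioc_subset_Icc_self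
  have hIB1 : IntegrableOn (fun q : ℝ × ℝ => q.1) B volume := by
    refine ((continuous_fst.continuousOn).integrableOn_compact
      (isCompact_Icc.prod isCompact_Icc : IsCompact (Icc xh b ×ˢ Icc 0 yh))).mono_set ?_
    exact Set.prod_mono Ioc_subset_Icc_self Ico_subset_Icc_self
  have hIA2 : IntegrableOn (fun q : ℝ × ℝ => q.2) A volume := by
    refine ((continuous_snd.continuousOn).integrableOn_compact
      (isCompact_Icc.prod isCompact_Icc : IsCompact (Icc a xh ×ˢ Icc yh 1))).mono_set ?_
    exact Set.prod_mono Ico_subset_Icc_self Ioc_subset_Icc_self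
  have hIB2 : IntegrableOn (fun q : ℝ × ℝ => q.2) B volume := by
    refine ((continuous_snd.continuousOn).integrableOn_compact
      (isCompact_Icc.prod isCompact_Icc : IsCompact (Icc xh b ×ˢ Icc 0 yh))).mono_set ?_
    exact Set.prod_mono Ioc_subset_Icc_self Ico_subset_Icc_self
  -- integrals
  have hInt1 : ∫ q in S, q.1 ∂M
      = θ⁻¹ * ((xh^2 - a^2)/2 * (1 - yh) + (b^2 - xh^2)/2 * yh) := by
    rw [hM, Measure.restrict_smul, integral_smul_measure, Measure.restrict_restrict hS, hSR,
      setIntegral_union hdisj hBmeas hIA1 hIB1, hAdef, hBdef,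
      my_rect_fst, my_rect_fst, my_int_Ico a xh hx1.le, my_int_Ioc xh b hx2.le,
      Real.volume_Ioc, Real.volume_Ico, ENNReal.toReal_ofReal (by linarith),
      ENNReal.toReal_ofReal (by linarith), hctr, smul_eq_mul]
    ring
  have hInt2 : ∫ q in S, q.2 ∂M
      = θ⁻¹ * ((xh - a) * ((1 - yh^2)/2) + (b - xh) * (yh^2/2)) := by
    rw [hM, Measure.restrict_smul, integral_smul_measure, Measure.restrict_restrict hS, hSR,
      setIntegral_union hdisj hBmeas hIA2 hIB2, hAdef, hBdef,
      my_rect_snd, my_rect_snd, my_int_Ioc yh 1 hy2.le, my_int_Ico 0 yh hy1.le,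
      Real.volume_Ico, Real.volume_Ioc, ENNReal.toReal_ofReal (by linarith),
      ENNReal.toReal_ofReal (by linarith), hctr, smul_eq_mul]
    ring
  rw [hInt1, hInt2, hMS]
  have hden : θ⁻¹ * ((xh - a) * (1 - yh) + (b - xh) * yh) ≠ 0 := by
    apply mul_ne_zero (by positivity)
    nlinarith
  rw [div_eq_iff hden, div_eq_iff hden]
  constructor
  · rintro ⟨h1, h2⟩
    have hθne : θ⁻¹ ≠ 0 := by positivity
    have E1 : (xh^2 - a^2)/2 * (1 - yh) + (b^2 - xh^2)/2 * yh
        = xh * ((xh - a) * (1 - yh) + (b - xh) * yh) :=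
      mul_left_cancel₀ hθne (by linear_combination h1)
    have E2 : (xh - a) * ((1 - yh^2)/2) + (b - xh) * (yh^2/2)
        = yh * ((xh - a) * (1 - yh) + (b - xh) * yh) :=
      mul_left_cancel₀ hθne (by linear_combination h2)
    have P1 : (b - xh)^2 * yh = (xh - a)^2 * (1 - yh) := by linear_combination 2 * E1
    have P2 : (b - xh) * yh^2 = (xh - a) * (1 - yh)^2 := by linear_combination (-2) * E2
    have hu0 : (0:ℝ) < xh - a := by linarith
    have hv0 : (0:ℝ) < b - xh := by linarith
    have hq1 : (0:ℝ) < 1 - yh := by linarith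
    have e3 : (xh - a) * yh - (b - xh) * (1 - yh) = 0 := by
      have hf : (xh - a) * (1 - yh) * ((xh - a) * yh - (b - xh) * (1 - yh)) = 0 := by
        linear_combination (b - xh) * P2 - yh * P1
      rcases mul_eq_zero.mp hf with h | h
      · exact absurd h (mul_pos hu0 hq1).ne'
      · exact h
    have hyh' : yh = 1/2 := by
      have hf2 : (xh - a)^2 * (yh^2 + yh*(1 - yh) + (1 - yh)^2) * (2*yh - 1) = 0 := by
        linear_combination yh * ((xh - a) * yh + (b - xh) * (1 - yh)) * e3 + (1 - yh)^2 * P1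
      rcases mul_eq_zero.mp hf2 with h | h
      · exact absurd h (mul_pos (pow_pos hu0 2) (by nlinarith)).ne'
      · linarith
    refine ⟨?_, hyh'⟩
    rw [hyh', ha, hb] at e3
    linarith
  · rintro ⟨hxh', hyh'⟩
    subst hxh' hyh'
    constructor
    · rw [ha, hb]; field_simp; ring
    · rw [ha, hb]; field_simp; ring
end

section
/- Let X and Y be jointly distributed integrable real random variables with joint distribution having full support on [xmin, xmax] × [ymin, ymax], where ymin < 0 < ymax, and suppose the map x̂ ↦ E[X | (X − x̂)·Y < 0] is continuous on [xmin, xmax]. Then there exists x̂ ∈ (xmin, xmax) with E[X | (X − x̂)·Y < 0] = x̂. -/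
open MeasureTheory Set

/-- Existence of a partially-informative equilibrium in the no-commitment disclosure
game: if the joint law of `(X, Y)` has full support on a rectangle with `ymin < 0 < ymax`,
and the nondisclosure-posterior map `x̂ ↦ E[X | (X − x̂)Y < 0]` is continuous on
`[xmin, xmax]`, then it has an interior fixed point. -/
theorem equilibrium_fixed_point_exists
    (Ω : Type*) [MeasurableSpace Ω] (μ : Measure Ω) [IsProbabilityMeasure μ]
    (X Y : Ω → ℝ) (hmX : Measurable X) (hmY : Measurable Y)
    (hX : Integrable X μ) (hY : Integrable Y μ)
    (xmin xmax ymin ymax : ℝ) (hx : xmin < xmax)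
    (hymin : ymin < 0) (hymax : 0 < ymax)
    (hrange : ∀ᵐ ω ∂μ, X ω ∈ Set.Icc xmin xmax ∧ Y ω ∈ Set.Icc ymin ymax)
    (hsupp : ∀ s : Set (ℝ × ℝ), IsOpen s →
      (s ∩ (Set.Icc xmin xmax ×ˢ Set.Icc ymin ymax)).Nonempty →
      0 < (μ.map (fun ω => (X ω, Y ω))) s)
    (h : ℝ → ℝ)
    (hdef : ∀ xh : ℝ, h xh =
      (∫ ω in {ω | (X ω - xh) * Y ω < 0}, X ω ∂μ) /
        (μ {ω | (X ω - xh) * Y ω < 0}).toReal)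
    (hcont : ContinuousOn h (Set.Icc xmin xmax)) :
    ∃ xh ∈ Set.Ioo xmin xmax, h xh = xh := by
  have hmXY : Measurable (fun ω => (X ω, Y ω)) := hmX.prodMk hmY
  have hmA : ∀ c : ℝ, MeasurableSet {ω | (X ω - c) * Y ω < 0} :=
    fun c => measurableSet_lt ((hmX.sub measurable_const).mul hmY) measurable_const
  -- positivity of the nondisclosure event at any c via full support
  have hpos : ∀ c : ℝ, (∃ p : ℝ × ℝ, p ∈ (Set.Icc xmin xmax ×ˢ Set.Icc ymin ymax) ∧
      (p.1 - c) * p.2 < 0) → 0 < μ {ω | (X ω - c) * Y ω < 0} := by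
    intro c ⟨p, hpmem, hplt⟩
    have hopen : IsOpen {q : ℝ × ℝ | (q.1 - c) * q.2 < 0} := by
      apply isOpen_lt _ continuous_const
      exact ((continuous_fst.sub continuous_const).mul continuous_snd)
    have hne : ({q : ℝ × ℝ | (q.1 - c) * q.2 < 0} ∩
        (Set.Icc xmin xmax ×ˢ Set.Icc ymin ymax)).Nonempty := ⟨p, hplt, hpmem⟩
    have := hsupp _ hopen hne
    rwa [Measure.map_apply hmXY hopen.measurableSet] at this
  have hmid1 : xmin < (xmin + xmax) / 2 := by linarith
  have hmid2 : (xmin + xmax) / 2 < xmax := by linarith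
  -- strict inequality at xmin : h xmin > xmin
  have key : ∀ c : ℝ, (0 < μ {ω | (X ω - c) * Y ω < 0}) →
      (∀ᵐ ω ∂μ, ω ∈ {ω | (X ω - c) * Y ω < 0} → c < X ω) →
      c < h c := by
    intro c hμA haeA
    set A := {ω | (X ω - c) * Y ω < 0} with hA
    set f : Ω → ℝ := fun ω => X ω - c with hf
    have hint : IntegrableOn f A μ := (hX.sub (integrable_const c)).integrableOn
    have hnn : 0 ≤ᵐ[μ.restrict A] f := by
      refine (ae_restrict_iff' (hmA c)).mpr ?_
      filter_upwards [haeA] with ω hω hωA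
      simpa [hf] using (le_of_lt (hω hωA))
    have hnull : μ (A \ (Function.support f ∩ A)) = 0 := by
      have hnull0 : μ {ω | ¬ (ω ∈ A → c < X ω)} = 0 := ae_iff.mp haeA
      refine measure_mono_null ?_ hnull0
      intro ω hω
      simp only [Set.mem_diff, Set.mem_inter_iff, not_and] at hω
      simp only [Set.mem_setOf_eq]
      intro himp
      have hcon := himp hω.1
      exact (hω.2 (by simpa [Function.mem_support, hf] using sub_ne_zero_of_ne (ne_of_gt hcon)) hω.1)
    have hμsupp : 0 < μ (Function.support f ∩ A) := by
      have : μ A ≤ μ (Function.support f ∩ A) := measure_mono_ae (ae_le_set.mpr hnull)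
      exact lt_of_lt_of_le hμA this
    have hIpos : 0 < ∫ ω in A, f ω ∂μ :=
      (setIntegral_pos_iff_support_of_nonneg_ae hnn hint).mpr hμsupp
    have hsplit : ∫ ω in A, f ω ∂μ = (∫ ω in A, X ω ∂μ) - (μ A).toReal * c := by
      rw [integral_sub hX.integrableOn (integrableOn_const (measure_ne_top μ A))]
      simp [smul_eq_mul, Measure.real]
    have hc : 0 < (μ A).toReal := ENNReal.toReal_pos (ne_of_gt hμA) (measure_ne_top μ A)
    rw [hdef c]
    rw [lt_div_iff₀ hc]
    rw [hsplit] at hIpos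
    linarith [hIpos]
  have key' : ∀ c : ℝ, (0 < μ {ω | (X ω - c) * Y ω < 0}) →
      (∀ᵐ ω ∂μ, ω ∈ {ω | (X ω - c) * Y ω < 0} → X ω < c) →
      h c < c := by
    intro c hμA haeA
    set A := {ω | (X ω - c) * Y ω < 0} with hA
    set f : Ω → ℝ := fun ω => c - X ω with hf
    have hint : IntegrableOn f A μ := ((integrable_const c).sub hX).integrableOn
    have hnn : 0 ≤ᵐ[μ.restrict A] f := by
      refine (ae_restrict_iff' (hmA c)).mpr ?_
      filter_upwards [haeA] with ω hω hωA
      simpa [hf] using (le_of_lt (hω hωA))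
    have hnull : μ (A \ (Function.support f ∩ A)) = 0 := by
      have hnull0 : μ {ω | ¬ (ω ∈ A → X ω < c)} = 0 := ae_iff.mp haeA
      refine measure_mono_null ?_ hnull0
      intro ω hω
      simp only [Set.mem_diff, Set.mem_inter_iff, not_and] at hω
      simp only [Set.mem_setOf_eq]
      intro himp
      have hcon := himp hω.1
      exact (hω.2 (by simpa [Function.mem_support, hf] using sub_ne_zero_of_ne (ne_of_gt hcon)) hω.1)
    have hμsupp : 0 < μ (Function.support f ∩ A) := by
      have : μ A ≤ μ (Function.support f ∩ A) := measure_mono_ae (ae_le_set.mpr hnull)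
      exact lt_of_lt_of_le hμA this
    have hIpos : 0 < ∫ ω in A, f ω ∂μ :=
      (setIntegral_pos_iff_support_of_nonneg_ae hnn hint).mpr hμsupp
    have hsplit : ∫ ω in A, f ω ∂μ = (μ A).toReal * c - (∫ ω in A, X ω ∂μ) := by
      rw [integral_sub (integrableOn_const (C := c) (measure_ne_top μ A)) hX.integrableOn]
      simp [smul_eq_mul, Measure.real]
    have hc : 0 < (μ A).toReal := ENNReal.toReal_pos (ne_of_gt hμA) (measure_ne_top μ A)
    rw [hdef c]
    rw [div_lt_iff₀ hc]
    rw [hsplit] at hIpos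
    linarith [hIpos]
  -- h xmin > xmin
  have hlo : xmin < h xmin := by
    apply key xmin
    · apply hpos
      refine ⟨((xmin + xmax) / 2, ymin), ⟨⟨le_of_lt hmid1, le_of_lt hmid2⟩,
        ⟨le_refl _, le_of_lt (lt_trans hymin hymax)⟩⟩, ?_⟩
      exact mul_neg_of_pos_of_neg (by simpa using sub_pos.mpr hmid1) hymin
    · filter_upwards [hrange] with ω hω hωA
      rcases lt_or_eq_of_le hω.1.1 with hlt | heq
      · exact hlt
      · exfalso
        simp only [Set.mem_setOf_eq, ← heq, sub_self, zero_mul] at hωA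
        exact lt_irrefl 0 hωA
  have hhi : h xmax < xmax := by
    apply key' xmax
    · apply hpos
      refine ⟨((xmin + xmax) / 2, ymax), ⟨⟨le_of_lt hmid1, le_of_lt hmid2⟩,
        ⟨le_of_lt (lt_trans hymin hymax), le_refl _⟩⟩, ?_⟩
      exact mul_neg_of_neg_of_pos (by simpa using sub_neg.mpr hmid2) hymax
    · filter_upwards [hrange] with ω hω hωA
      rcases lt_or_eq_of_le hω.1.2 with hlt | heq
      · exact hlt
      · exfalso
        simp only [Set.mem_setOf_eq, heq, sub_self, zero_mul] at hωA
        exact lt_irrefl 0 hωA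
  -- intermediate value theorem for g = h - id
  have hg : ContinuousOn (fun x => h x - x) (Set.Icc xmin xmax) :=
    hcont.sub continuousOn_id
  have hmem : (0 : ℝ) ∈ Set.Ioo (h xmax - xmax) (h xmin - xmin) :=
    ⟨by linarith, by linarith⟩
  have := intermediate_value_Ioo' (le_of_lt hx) hg hmem
  obtain ⟨xh, hxh, hgx⟩ := this
  simp only at hgx
  exact ⟨xh, hxh, by linarith⟩
end
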